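/- Under the high-confidence assumption p_j(x*_j) > 1 - ε for all j with (n+1)ε ≤ 1, greedy parallel decoding equals greedy joint decoding: argmax_z p(z) = argmax_z ∏_j p_j(z_j) = x*, where both maximizers are unique. -/

import Mathlib

open scoped BigOperators

/-- Under high confidence with `(n+1)ε ≤ 1`, greedy parallel decoding
equals greedy joint decoding: `x*` is the unique maximizer of both the joint `p`
and the product of marginals `q(z) = ∏ j, p_j (z j)`. -/
theorem stmt_2 {V : Type*} [Fintype V] [DecidableEq V] {n : ℕ}
    (p : (Fin n → V) → ℝ) (pm : Fin n → V → ℝ) (x' : Fin n → V) (ε : ℝ)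
    (hp0 : ∀ z, 0 ≤ p z) (hp1 : ∑ z : Fin n → V, p z = 1)
    (hm : ∀ j v, pm j v = ∑ z : Fin n → V, if z j = v then p z else 0)
    (hcard : 2 ≤ Fintype.card V)
    (hconf : ∀ j, pm j (x' j) > 1 - ε)
    (hε : 0 < ε) (hεn : ((n : ℝ) + 1) * ε ≤ 1) :
    (∀ z : Fin n → V, z ≠ x' → p z < p x') ∧
    (∀ z : Fin n → V, z ≠ x' → ∏ j, pm j (z j) < ∏ j, pm j (x' j)) := by
  classical
  have hn0 : (0:ℝ) ≤ (n:ℝ) := Nat.cast_nonneg n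
  have hε1 : ε ≤ 1 - (n:ℝ) * ε := by nlinarith
  -- basic facts about pm
  have hpm0 : ∀ j v, 0 ≤ pm j v := by
    intro j v; rw [hm]
    refine Finset.sum_nonneg fun z _ => ?_
    split
    · exact hp0 z
    · exact le_refl 0
  have hpm_sum : ∀ j, ∑ v : V, pm j v = 1 := by
    intro j
    calc ∑ v : V, pm j v
        = ∑ v : V, ∑ z : Fin n → V, if z j = v then p z else 0 := by
          simp only [hm]
      _ = ∑ z : Fin n → V, ∑ v : V, if z j = v then p z else 0 := Finset.sum_comm
      _ = ∑ z : Fin n → V, p z := by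
          refine Finset.sum_congr rfl fun z _ => ?_
          simp
      _ = 1 := hp1
  have hpm_le1 : ∀ j v, pm j v ≤ 1 := by
    intro j v
    have := Finset.single_le_sum (f := fun v => pm j v)
      (fun v _ => hpm0 j v) (Finset.mem_univ v)
    rw [hpm_sum j] at this
    exact this
  have hpair : ∀ j (u v : V), u ≠ v → pm j u + pm j v ≤ 1 := by
    intro j u v huv
    have hsub : ({u, v} : Finset V) ⊆ Finset.univ := Finset.subset_univ _
    have := Finset.sum_le_sum_of_subset_of_nonneg hsub
      (fun w _ _ => hpm0 j w)
    rw [Finset.sum_pair huv, hpm_sum j] at this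
    exact this
  have hsmall : ∀ j (v : V), v ≠ x' j → pm j v < ε := by
    intro j v hv
    have h1 := hpair j v (x' j) hv
    have h2 := hconf j
    linarith
  -- p z ≤ pm j (z j)
  have hple : ∀ (z : Fin n → V) (j : Fin n), p z ≤ pm j (z j) := by
    intro z j
    rw [hm]
    have := Finset.single_le_sum
      (f := fun w : Fin n → V => if w j = z j then p w else 0)
      (fun w _ => by split; exact hp0 w; exact le_refl 0)
      (Finset.mem_univ z)
    simpa using this
  -- complement identity
  have hcompl : ∀ j, ∑ z : Fin n → V, (if z j ≠ x' j then p z else 0)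
      = 1 - pm j (x' j) := by
    intro j
    have : ∀ z : Fin n → V,
        (if z j ≠ x' j then p z else 0) = p z - (if z j = x' j then p z else 0) := by
      intro z
      by_cases h : z j = x' j <;> simp [h]
    rw [Finset.sum_congr rfl fun z _ => this z, Finset.sum_sub_distrib, hp1, ← hm]
  -- union bound
  have hunion : ∑ z ∈ Finset.univ.erase x', p z ≤ (n:ℝ) * ε := by
    calc ∑ z ∈ Finset.univ.erase x', p z
        ≤ ∑ z ∈ Finset.univ.erase x',
            ∑ j : Fin n, (if z j ≠ x' j then p z else 0) := by
          refine Finset.sum_le_sum fun z hz => ?_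
          have hzne : z ≠ x' := (Finset.mem_erase.mp hz).1
          obtain ⟨j0, hj0⟩ := Function.ne_iff.mp hzne
          have := Finset.single_le_sum
            (f := fun j : Fin n => if z j ≠ x' j then p z else 0)
            (fun j _ => by split; exact hp0 z; exact le_refl 0)
            (Finset.mem_univ j0)
          simpa [hj0] using this
      _ = ∑ j : Fin n, ∑ z ∈ Finset.univ.erase x',
            (if z j ≠ x' j then p z else 0) := Finset.sum_comm
      _ ≤ ∑ j : Fin n, ∑ z : Fin n → V, (if z j ≠ x' j then p z else 0) := by
          refine Finset.sum_le_sum fun j _ => ?_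
          refine Finset.sum_le_sum_of_subset_of_nonneg (Finset.subset_univ _)
            (fun w _ _ => ?_)
          split
          · exact hp0 w
          · exact le_refl 0
      _ = ∑ j : Fin n, (1 - pm j (x' j)) := by
          exact Finset.sum_congr rfl fun j _ => hcompl j
      _ ≤ ∑ _j : Fin n, ε := by
          refine Finset.sum_le_sum fun j _ => ?_
          have := hconf j; linarith
      _ = (n:ℝ) * ε := by simp [mul_comm]
  have hx'big : 1 - (n:ℝ) * ε ≤ p x' := by
    have hsplit : p x' + ∑ z ∈ Finset.univ.erase x', p z = 1 := by
      rw [Finset.add_sum_erase _ p (Finset.mem_univ x')]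
      exact hp1
    linarith
  constructor
  · intro z hz
    obtain ⟨j0, hj0⟩ := Function.ne_iff.mp hz
    have h1 : p z < ε := lt_of_le_of_lt (hple z j0) (hsmall j0 (z j0) hj0)
    linarith
  · intro z hz
    obtain ⟨j0, hj0⟩ := Function.ne_iff.mp hz
    have hεle1 : ε ≤ 1 := by nlinarith
    have h1 : ∏ j, pm j (z j) ≤ pm j0 (z j0) := by
      calc ∏ j, pm j (z j)
          = pm j0 (z j0) * ∏ j ∈ Finset.univ.erase j0, pm j (z j) :=
            (Finset.mul_prod_erase _ _ (Finset.mem_univ j0)).symm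
        _ ≤ pm j0 (z j0) * 1 := by
            refine mul_le_mul_of_nonneg_left ?_ (hpm0 j0 (z j0))
            exact Finset.prod_le_one (fun j _ => hpm0 j (z j)) (fun j _ => hpm_le1 j (z j))
        _ = pm j0 (z j0) := mul_one _
    have h2 : ∏ j, pm j (z j) < ε := lt_of_le_of_lt h1 (hsmall j0 (z j0) hj0)
    have h3 : (1 - ε) ^ n ≤ ∏ j, pm j (x' j) := by
      calc (1 - ε) ^ n = ∏ _j : Fin n, (1 - ε) := by simp
        _ ≤ ∏ j, pm j (x' j) := by
            refine Finset.prod_le_prod (fun j _ => by linarith) (fun j _ => ?_)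
            exact le_of_lt (hconf j)
    have h4 : 1 - (n:ℝ) * ε ≤ (1 - ε) ^ n := by
      have := one_add_mul_le_pow (a := -ε) (by linarith) n
      calc 1 - (n:ℝ) * ε = 1 + (n:ℝ) * (-ε) := by ring
        _ ≤ (1 + -ε) ^ n := this
        _ = (1 - ε) ^ n := by ring_nf
    linarith
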